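/- Let a < b be integers and R = ℤ[x]/((x−a)(x−b)). For nonzero integers u, v, the product of ideals (x−b, u)·(x−b, v) in R equals the ideal ((x−b)·gcd(u, v, a−b), uv), and hence is equivalent (up to multiplication by an element of K^×) to the ideal (x−b, uv/gcd(u, v, a−b)). -/

import Mathlib

open Polynomial

set_option maxHeartbeats 2000000 in
/-- In `R = ℤ[x]/((x-a)(x-b))` with `a < b` and nonzero integers `u, v`, the product of
ideals `(x-b, u)·(x-b, v)` equals `((x-b)·gcd(u,v,a-b), uv)`, hence is equivalent (up to
multiplication by a unit of the total quotient ring, i.e. `r·I = s·J` for nonzerodivisors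
`r, s` of `R`) to the ideal `(x-b, uv/gcd(u,v,a-b))`. -/
theorem stmt_16 (a b u v : ℤ) (hab : a < b) (hu : u ≠ 0) (hv : v ≠ 0) :
    let χ : ℤ[X] := (X - C a) * (X - C b)
    let mk := Ideal.Quotient.mk (Ideal.span {χ})
    let g : ℤ := Int.gcd u (Int.gcd v (a - b))
    let I := Ideal.span {mk (X - C b), mk (C u)}
    let J := Ideal.span {mk (X - C b), mk (C v)}
    I * J = Ideal.span {mk ((X - C b) * C g), mk (C (u * v))} ∧
    ∃ r s : ℤ[X] ⧸ Ideal.span {χ},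
      r ∈ nonZeroDivisors (ℤ[X] ⧸ Ideal.span {χ}) ∧
      s ∈ nonZeroDivisors (ℤ[X] ⧸ Ideal.span {χ}) ∧
      Ideal.span {r} * (I * J) =
        Ideal.span {s} * Ideal.span {mk (X - C b), mk (C (u * v / g))} := by
  intro χ mk g I J
  have mχ : χ.Monic := (monic_X_sub_C a).mul (monic_X_sub_C b)
  have hg1 : g ∣ u := Int.gcd_dvd_left _ _
  have hg2 : g ∣ v := (Int.gcd_dvd_right _ _).trans (Int.gcd_dvd_left _ _)
  have hg3 : g ∣ (a - b) := (Int.gcd_dvd_right _ _).trans (Int.gcd_dvd_right _ _)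
  have hgne : g ≠ 0 := by
    simp only [g, ne_eq, Int.natCast_eq_zero, Int.gcd_eq_zero_iff]
    tauto
  have hχ0 : mk χ = 0 := by
    rw [Ideal.Quotient.eq_zero_iff_mem]
    exact Ideal.subset_span rfl
  have hmk : ∀ p : ℤ[X], χ ∣ p → mk p = 0 := by
    intro p hp
    rw [Ideal.Quotient.eq_zero_iff_mem, Ideal.mem_span_singleton]
    exact hp
  -- key relation : (x-b)^2 = (a-b)(x-b) in R
  have key : mk (X - C b) * mk (X - C b) = mk (C (a - b)) * mk (X - C b) := by
    rw [← map_mul, ← map_mul, ← sub_eq_zero, ← map_sub]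
    apply hmk
    refine ⟨1, ?_⟩
    simp only [χ, map_sub]
    ring
  -- Bezout
  obtain ⟨p, q, r, hpqr⟩ : ∃ p q r : ℤ, (g : ℤ) = u * p + v * q + (a - b) * r := by
    have h1 := Int.gcd_eq_gcd_ab u (Int.gcd v (a - b))
    have h2 := Int.gcd_eq_gcd_ab v (a - b)
    exact ⟨Int.gcdA u (Int.gcd v (a - b)),
      Int.gcdA v (a - b) * Int.gcdB u (Int.gcd v (a - b)),
      Int.gcdB v (a - b) * Int.gcdB u (Int.gcd v (a - b)), by
        show ((Int.gcd u (Int.gcd v (a - b)) : ℤ)) = _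
        rw [h1, h2]; ring⟩
  -- first part
  have part1 : I * J = Ideal.span {mk ((X - C b) * C g), mk (C (u * v))} := by
    show Ideal.span {mk (X - C b), mk (C u)} * Ideal.span {mk (X - C b), mk (C v)} = _
    rw [Ideal.span_pair_mul_span_pair]
    apply le_antisymm
    · rw [Ideal.span_le]
      rintro x hx
      simp only [Set.mem_insert_iff, Set.mem_singleton_iff] at hx
      rcases hx with h | h | h | h <;> subst h
      · rw [key]
        obtain ⟨k, hk⟩ := hg3
        have : mk (C (a - b)) * mk (X - C b) = mk (C k) * mk ((X - C b) * C g) := by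
          rw [← map_mul, ← map_mul, hk]
          congr 1
          rw [map_mul]
          ring
        rw [this]
        exact Ideal.mul_mem_left _ _ (Ideal.subset_span (Set.mem_insert _ _))
      · obtain ⟨k, hk⟩ := hg2
        have : mk (X - C b) * mk (C v) = mk (C k) * mk ((X - C b) * C g) := by
          rw [← map_mul, ← map_mul, hk]
          congr 1
          rw [map_mul]
          ring
        rw [this]
        exact Ideal.mul_mem_left _ _ (Ideal.subset_span (Set.mem_insert _ _))
      · obtain ⟨k, hk⟩ := hg1
        have : mk (C u) * mk (X - C b) = mk (C k) * mk ((X - C b) * C g) := by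
          rw [← map_mul, ← map_mul, hk]
          congr 1
          rw [map_mul]
          ring
        rw [this]
        exact Ideal.mul_mem_left _ _ (Ideal.subset_span (Set.mem_insert _ _))
      · rw [← map_mul, ← map_mul]
        exact Ideal.subset_span (Set.mem_insert_of_mem _ rfl)
    · rw [Ideal.span_le]
      rintro x hx
      simp only [Set.mem_insert_iff, Set.mem_singleton_iff] at hx
      have m1 : mk (X - C b) * mk (X - C b) ∈
          Ideal.span {mk (X - C b) * mk (X - C b), mk (X - C b) * mk (C v),
            mk (C u) * mk (X - C b), mk (C u) * mk (C v)} :=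
        Ideal.subset_span (Set.mem_insert _ _)
      have m2 : mk (X - C b) * mk (C v) ∈
          Ideal.span {mk (X - C b) * mk (X - C b), mk (X - C b) * mk (C v),
            mk (C u) * mk (X - C b), mk (C u) * mk (C v)} :=
        Ideal.subset_span (Set.mem_insert_of_mem _ (Set.mem_insert _ _))
      have m3 : mk (C u) * mk (X - C b) ∈
          Ideal.span {mk (X - C b) * mk (X - C b), mk (X - C b) * mk (C v),
            mk (C u) * mk (X - C b), mk (C u) * mk (C v)} :=
        Ideal.subset_span (Set.mem_insert_of_mem _ (Set.mem_insert_of_mem _ (Set.mem_insert _ _)))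
      rcases hx with h | h <;> subst h
      · have hpoly : (X - C b) * C g =
            C p * (C u * (X - C b)) + C q * ((X - C b) * C v)
              + C r * (C (a - b) * (X - C b)) := by
          rw [show (C g : ℤ[X]) = C (u * p + v * q + (a - b) * r) from congrArg C hpqr]
          simp only [map_add, map_mul, map_sub]
          ring
        have hexp : mk ((X - C b) * C g) =
            mk (C p) * (mk (C u) * mk (X - C b)) + mk (C q) * (mk (X - C b) * mk (C v))
              + mk (C r) * (mk (C (a - b)) * mk (X - C b)) := by
          rw [congrArg mk hpoly, map_add, map_add, map_mul, map_mul, map_mul, map_mul,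
            map_mul, map_mul]
        rw [hexp, ← key]
        exact Ideal.add_mem _
          (Ideal.add_mem _ (Ideal.mul_mem_left _ _ m3) (Ideal.mul_mem_left _ _ m2))
          (Ideal.mul_mem_left _ _ m1)
      · rw [map_mul]
        exact Ideal.subset_span (Set.mem_insert_of_mem _ (Set.mem_insert_of_mem _
          (Set.mem_insert_of_mem _ rfl)))
  refine ⟨part1, 1, mk (C g), one_mem _, ?_, ?_⟩
  · -- mk (C g) is a nonzerodivisor
    rw [mem_nonZeroDivisors_iff_right]
    intro x hx
    obtain ⟨pp, rfl⟩ := Ideal.Quotient.mk_surjective x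
    rw [← map_mul, Ideal.Quotient.eq_zero_iff_mem, Ideal.mem_span_singleton] at hx
    -- χ ∣ pp * C g → χ ∣ pp
    have hmod : pp %ₘ χ = 0 := by
      by_contra hne
      have hdvd : χ ∣ (pp %ₘ χ) * C g := by
        have hmd := modByMonic_add_div pp χ
        obtain ⟨c, hc⟩ := hx
        exact ⟨c - (pp /ₘ χ) * C g, by linear_combination C g * hmd + hc⟩
      have hlt : ((pp %ₘ χ) * C g).degree < χ.degree := by
        rw [degree_mul, degree_C hgne]
        simpa using degree_modByMonic_lt pp mχ
      have := eq_zero_of_dvd_of_degree_lt hdvd hlt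
      rcases mul_eq_zero.mp this with h | h
      · exact hne h
      · exact hgne (by simpa using h)
    rw [Ideal.Quotient.eq_zero_iff_mem, Ideal.mem_span_singleton]
    exact (modByMonic_eq_zero_iff_dvd mχ).mp hmod
  · rw [Ideal.span_singleton_one, Ideal.top_mul, part1]
    conv_rhs => rw [Ideal.span_insert, Ideal.mul_sup,
      Ideal.span_singleton_mul_span_singleton, Ideal.span_singleton_mul_span_singleton]
    conv_lhs => rw [Ideal.span_insert]
    congr 1
    · congr 1
      rw [← map_mul]
      congr 1
      ring
    · congr 1
      rw [← map_mul]
      rw [show (C (u * v) : ℤ[X]) = C (g * (u * v / g)) from by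
        rw [Int.mul_ediv_cancel' (hg1.mul_right v)]]
      rw [map_mul]
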